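/- Let ν = (1/N) Σᵢ δ_{ω̂ᵢ} be an empirical measure on ℝ, θ > 0, and f(ω) = max{ω + d - z, -z, 0} for fixed d, z ∈ ℝ. Then the worst-case expectation sup { E^μ[f] : μ probability measure on ℝ, W₁(μ, ν) ≤ θ } equals the infimum over λ ≥ 1 and s₁,…,s_N of λθ + (1/N) Σᵢ sᵢ subject to ω̂ᵢ + d - z ≤ sᵢ, sᵢ + z ≥ 0 and sᵢ ≥ 0 for all i. -/

import Mathlib

open MeasureTheory
open scoped ENNReal NNReal


lemma aux_integrable_dirac {α} [MeasurableSpace α] [MeasurableSingletonClass α]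
    {f : α → ℝ} (hf : StronglyMeasurable f) (a : α) :
    Integrable f (Measure.dirac a) := by
  refine ⟨hf.aestronglyMeasurable, ?_⟩
  simp [HasFiniteIntegral, lintegral_dirac]

lemma aux_map_finset_sum {ι α β} [MeasurableSpace α] [MeasurableSpace β]
    {f : α → β} (hf : Measurable f) (s : Finset ι) (μ : ι → Measure α) :
    (∑ i ∈ s, μ i).map f = ∑ i ∈ s, (μ i).map f := by
  classical
  induction s using Finset.induction with
  | empty => simp
  | @insert a s h ih => rw [Finset.sum_insert h, Finset.sum_insert h, Measure.map_add _ _ hf, ih]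

lemma aux_lip (d z a b : ℝ) :
    max (a + d - z) (max (-z) 0) - max (b + d - z) (max (-z) 0) ≤ |a - b| := by
  have h1 := abs_max_sub_max_le_max (a + d - z) (max (-z) 0) (b + d - z) (max (-z) 0)
  have h2 : a + d - z - (b + d - z) = a - b := by ring
  have h3 := le_abs_self (max (a + d - z) (max (-z) 0) - max (b + d - z) (max (-z) 0))
  simp [h2] at h1
  exact h3.trans (h1.trans (by simp [abs_nonneg]))

/-- The order-1 Wasserstein distance on `ℝ`, as the infimum over couplings of the
transport cost `∫ |ω - ω'|`. -/
noncomputable def W1 (μ ν : Measure ℝ) : ℝ≥0∞ :=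
  ⨅ κ ∈ {κ : Measure (ℝ × ℝ) | κ.map Prod.fst = μ ∧ κ.map Prod.snd = ν},
    ∫⁻ p, ENNReal.ofReal |p.1 - p.2| ∂κ

/-- Kantorovich-duality reformulation of the worst-case expectation of the piecewise
affine loss `ω ↦ max{ω + d - z, -z, 0}` over a Wasserstein ball around the empirical
distribution `ν = (1/N) ∑ᵢ δ_{ω̂ᵢ}`. -/
theorem worst_case_expectation_dual (N : ℕ) (hN : 0 < N) (ωhat : Fin N → ℝ)
    (θ : ℝ) (hθ : 0 < θ) (d z : ℝ) :
    sSup {e : ℝ | ∃ μ : Measure ℝ, IsProbabilityMeasure μ ∧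
        W1 μ ((N : ℝ≥0∞)⁻¹ • ∑ i : Fin N, Measure.dirac (ωhat i)) ≤ ENNReal.ofReal θ ∧
        e = ∫ x, max (x + d - z) (max (-z) 0) ∂μ}
      = sInf {v : ℝ | ∃ (lam : ℝ) (s : Fin N → ℝ), 1 ≤ lam ∧
          (∀ i, ωhat i + d - z ≤ s i ∧ 0 ≤ s i + z ∧ 0 ≤ s i) ∧
          v = lam * θ + (1 / (N : ℝ)) * ∑ i, s i} := by
  classical
  set f : ℝ → ℝ := fun x => max (x + d - z) (max (-z) 0) with hfdef
  have hfc : Continuous f := by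
    apply Continuous.max _ continuous_const
    fun_prop
  set ν : Measure ℝ := (N : ℝ≥0∞)⁻¹ • ∑ i : Fin N, Measure.dirac (ωhat i) with hνdef
  set V : ℝ := θ + (1 / (N : ℝ)) * ∑ i, f (ωhat i) with hVdef
  have hNR : (0:ℝ) < N := Nat.cast_pos.mpr hN
  have hNne : (N : ℝ≥0∞) ≠ 0 := Nat.cast_ne_zero.mpr hN.ne'
  have hNnetop : (N : ℝ≥0∞) ≠ ⊤ := ENNReal.natCast_ne_top N
  have hinvtop : (N : ℝ≥0∞)⁻¹ ≠ ⊤ := ENNReal.inv_ne_top.mpr hNne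
  have hinvtoReal : ((N : ℝ≥0∞)⁻¹).toReal = 1 / (N:ℝ) := by
    rw [ENNReal.toReal_inv]; simp
  have hfnn : ∀ x, 0 ≤ f x := fun x => le_trans (le_max_right _ _) (le_max_right _ _)
  have hfint_dirac : ∀ a : ℝ, Integrable f (Measure.dirac a) :=
    fun a => aux_integrable_dirac hfc.stronglyMeasurable a
  have hfintν : Integrable f ν := by
    rw [hνdef]
    exact (integrable_finset_sum_measure.mpr (fun i _ => hfint_dirac _)).smul_measure hinvtop
  have hintν : ∫ x, f x ∂ν = (1 / (N:ℝ)) * ∑ i, f (ωhat i) := by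
    rw [hνdef, integral_smul_measure,
      integral_finset_sum_measure (fun i _ => hfint_dirac _)]
    simp [integral_dirac, hinvtoReal]
  have hVpos : 0 < V := by
    have : 0 ≤ (1 / (N:ℝ)) * ∑ i, f (ωhat i) := by
      apply mul_nonneg (by positivity)
      exact Finset.sum_nonneg fun i _ => hfnn _
    rw [hVdef]; linarith
  -- upper bound for the sup-side set
  have hub : ∀ e ∈ {e : ℝ | ∃ μ : Measure ℝ, IsProbabilityMeasure μ ∧
      W1 μ ν ≤ ENNReal.ofReal θ ∧ e = ∫ x, f x ∂μ}, e ≤ V := by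
    rintro e ⟨μ, hμprob, hW, rfl⟩
    by_cases hint : Integrable f μ
    · apply le_of_forall_pos_le_add
      intro ε hε
      have hlt : W1 μ ν < ENNReal.ofReal (θ + ε) :=
        lt_of_le_of_lt hW ((ENNReal.ofReal_lt_ofReal_iff (by linarith)).mpr (by linarith))
      unfold W1 at hlt
      rw [iInf_lt_iff] at hlt
      obtain ⟨κ, hlt⟩ := hlt
      rw [iInf_lt_iff] at hlt
      obtain ⟨⟨hκ1, hκ2⟩, hcost⟩ := hlt
      have hκfin : ∫⁻ p, ENNReal.ofReal |p.1 - p.2| ∂κ < ⊤ := hcost.trans ENNReal.ofReal_lt_top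
      have hI1 : Integrable (fun p : ℝ × ℝ => f p.1) κ := by
        have h := hint; rw [← hκ1] at h
        exact (integrable_map_measure hfc.aestronglyMeasurable
          measurable_fst.aemeasurable).mp h
      have hI2 : Integrable (fun p : ℝ × ℝ => f p.2) κ := by
        have h := hfintν; rw [← hκ2] at h
        exact (integrable_map_measure hfc.aestronglyMeasurable
          measurable_snd.aemeasurable).mp h
      have hmeasc : Measurable (fun p : ℝ × ℝ => |p.1 - p.2|) :=
        (measurable_fst.sub measurable_snd).abs
      have hIc : Integrable (fun p : ℝ × ℝ => |p.1 - p.2|) κ := by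
        refine ⟨hmeasc.aestronglyMeasurable, ?_⟩
        rw [HasFiniteIntegral]
        have hemb : ∀ p : ℝ × ℝ, ‖|p.1 - p.2|‖ₑ = ENNReal.ofReal |p.1 - p.2| := by
          intro p; rw [← ofReal_norm]; simp [Real.norm_eq_abs, abs_abs]
        simp_rw [hemb]; exact hκfin
      have heq1 : ∫ x, f x ∂μ = ∫ p : ℝ × ℝ, f p.1 ∂κ := by
        rw [← hκ1, integral_map measurable_fst.aemeasurable hfc.aestronglyMeasurable]
      have heq2 : ∫ x, f x ∂ν = ∫ p : ℝ × ℝ, f p.2 ∂κ := by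
        rw [← hκ2, integral_map measurable_snd.aemeasurable hfc.aestronglyMeasurable]
      have hmono : ∫ p : ℝ × ℝ, (f p.1 - f p.2) ∂κ ≤ ∫ p : ℝ × ℝ, |p.1 - p.2| ∂κ := by
        apply integral_mono (hI1.sub hI2) hIc
        intro p
        exact aux_lip d z p.1 p.2
      have hcostR : ∫ p : ℝ × ℝ, |p.1 - p.2| ∂κ ≤ θ + ε := by
        rw [integral_eq_lintegral_of_nonneg_ae
          (Filter.Eventually.of_forall fun p => abs_nonneg _) hmeasc.aestronglyMeasurable]
        exact ENNReal.toReal_le_of_le_ofReal (by linarith) hcost.le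
      rw [integral_sub hI1 hI2] at hmono
      have hkey : ∫ x, f x ∂μ - ∫ x, f x ∂ν ≤ θ + ε := by
        rw [heq1, heq2]; linarith
      rw [hVdef, ← hintν]
      linarith
    · rw [integral_undef hint]; exact hVpos.le
  have hne : (∫ x, f x ∂ν) ∈ {e : ℝ | ∃ μ : Measure ℝ, IsProbabilityMeasure μ ∧
      W1 μ ν ≤ ENNReal.ofReal θ ∧ e = ∫ x, f x ∂μ} := by
    refine ⟨ν, ?_, ?_, rfl⟩
    · constructor
      rw [hνdef]
      simp only [Measure.smul_apply, Measure.coe_finset_sum, Finset.sum_apply,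
        Measure.dirac_apply_of_mem (Set.mem_univ _), smul_eq_mul]
      rw [Finset.sum_const, Finset.card_univ, Fintype.card_fin, nsmul_eq_mul, mul_one]
      exact ENNReal.inv_mul_cancel hNne hNnetop
    · have hdiag : Measurable (fun x : ℝ => (x, x)) := measurable_id.prodMk measurable_id
      have hmem : ν.map (fun x : ℝ => (x, x)) ∈
          {κ : Measure (ℝ × ℝ) | κ.map Prod.fst = ν ∧ κ.map Prod.snd = ν} := by
        constructor
        · rw [Measure.map_map measurable_fst hdiag]; simp [Function.comp_def]
        · rw [Measure.map_map measurable_snd hdiag]; simp [Function.comp_def]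
      have hcost : ∫⁻ p, ENNReal.ofReal |p.1 - p.2| ∂(ν.map (fun x : ℝ => (x, x))) = 0 := by
        rw [lintegral_map (f := fun p : ℝ × ℝ => ENNReal.ofReal |p.1 - p.2|) ((measurable_fst.sub measurable_snd).abs.ennreal_ofReal) hdiag]
        simp
      calc W1 ν ν ≤ ∫⁻ p, ENNReal.ofReal |p.1 - p.2| ∂(ν.map (fun x : ℝ => (x, x))) :=
            iInf₂_le _ hmem
        _ ≤ ENNReal.ofReal θ := by rw [hcost]; exact zero_le
  -- lower bound approximation
  have hlb : ∀ ε : ℝ, 0 < ε → ∃ e ∈ {e : ℝ | ∃ μ : Measure ℝ, IsProbabilityMeasure μ ∧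
      W1 μ ν ≤ ENNReal.ofReal θ ∧ e = ∫ x, f x ∂μ}, V - ε ≤ e := by
    intro ε hε
    set j : Fin N := ⟨0, hN⟩ with hjdef
    set c : ℝ := f (ωhat j) - (ωhat j + d - z) with hcdef
    have hc0 : 0 ≤ c := by
      have : ωhat j + d - z ≤ f (ωhat j) := le_max_left _ _
      rw [hcdef]; linarith
    set B : ℝ := max (max (-z) 0 - (ωhat j + d - z)) 0 with hBdef
    have hB0 : 0 ≤ B := le_max_right _ _
    set m : ℝ := min (1 / (N:ℝ)) (min (ε / (2 * (c + 1))) (θ / (B + 1))) with hmdef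
    have hm0 : 0 < m := lt_min (by positivity) (lt_min (by positivity) (by positivity))
    have hmN : m ≤ 1 / (N:ℝ) := min_le_left _ _
    have hmε : m * c ≤ ε / 2 := by
      have h1 : m ≤ ε / (2 * (c + 1)) := le_trans (min_le_right _ _) (min_le_left _ _)
      have h2 : m * c ≤ (ε / (2 * (c + 1))) * c := mul_le_mul_of_nonneg_right h1 hc0
      have h3 : (ε / (2 * (c + 1))) * c ≤ ε / 2 := by
        rw [div_mul_eq_mul_div, div_le_div_iff₀ (by positivity) (by positivity)]
        nlinarith
      linarith
    set x : ℝ := ωhat j + θ / m with hxdef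
    have hBbound : B ≤ θ / m := by
      have h1 : m ≤ θ / (B + 1) := le_trans (min_le_right _ _) (min_le_right _ _)
      have h2 : m * (B + 1) ≤ θ := by
        rw [le_div_iff₀ (by positivity)] at h1; linarith
      rw [le_div_iff₀ hm0]; nlinarith
    have hfx : f x = x + d - z := by
      apply max_eq_left
      have h1 : max (-z) 0 - (ωhat j + d - z) ≤ B := le_max_left _ _
      rw [hxdef]; linarith
    have hmθ : m * (θ / m) = θ := by
      field_simp
    set m' : ℝ≥0∞ := ENNReal.ofReal m with hm'def
    have hm'top : m' ≠ ⊤ := ENNReal.ofReal_ne_top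
    have hNinv_eq : (N : ℝ≥0∞)⁻¹ = ENNReal.ofReal (1/(N:ℝ)) := by
      rw [one_div, ENNReal.ofReal_inv_of_pos hNR, ENNReal.ofReal_natCast]
    have hm'le : m' ≤ (N : ℝ≥0∞)⁻¹ := by
      rw [hNinv_eq, hm'def]; exact ENNReal.ofReal_le_ofReal hmN
    have hsub_add : ((N:ℝ≥0∞)⁻¹ - m') + m' = (N:ℝ≥0∞)⁻¹ := tsub_add_cancel_of_le hm'le
    have hsubtop : (N:ℝ≥0∞)⁻¹ - m' ≠ ⊤ :=
      (tsub_le_self.trans_lt (lt_top_iff_ne_top.mpr hinvtop)).ne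
    set A : Measure ℝ := (N:ℝ≥0∞)⁻¹ • ∑ i ∈ Finset.univ.erase j, Measure.dirac (ωhat i)
      with hAdef
    set μ : Measure ℝ := A + ((N:ℝ≥0∞)⁻¹ - m') • Measure.dirac (ωhat j)
      + m' • Measure.dirac x with hμdef
    have hcardcast : ((N - 1 : ℕ) : ℝ≥0∞) + 1 = (N : ℝ≥0∞) := by
      rw [← Nat.cast_one (R := ℝ≥0∞), ← Nat.cast_add, Nat.sub_add_cancel hN]
    have hμprob : IsProbabilityMeasure μ := by
      constructor
      rw [hμdef, hAdef]
      simp only [Measure.add_apply, Measure.smul_apply, smul_eq_mul,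
        Measure.coe_finset_sum, Finset.sum_apply,
        Measure.dirac_apply_of_mem (Set.mem_univ _)]
      rw [Finset.sum_const, Finset.card_erase_of_mem (Finset.mem_univ j),
        Finset.card_univ, Fintype.card_fin, nsmul_eq_mul]
      simp only [mul_one]
      rw [add_assoc, hsub_add]
      have h2 : ((N:ℝ≥0∞))⁻¹ * ↑(N-1) + (↑N)⁻¹ = (↑N)⁻¹ * ((↑(N-1):ℝ≥0∞) + 1) := by ring
      rw [h2, hcardcast]
      exact ENNReal.inv_mul_cancel hNne hNnetop
    set κ : Measure (ℝ × ℝ) :=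
      (N:ℝ≥0∞)⁻¹ • ∑ i ∈ Finset.univ.erase j, Measure.dirac (ωhat i, ωhat i)
      + ((N:ℝ≥0∞)⁻¹ - m') • Measure.dirac (ωhat j, ωhat j)
      + m' • Measure.dirac (x, ωhat j) with hκdef
    have hκfst : κ.map Prod.fst = μ := by
      rw [hκdef, Measure.map_add _ _ measurable_fst, Measure.map_add _ _ measurable_fst,
        Measure.map_smul, Measure.map_smul, Measure.map_smul,
        aux_map_finset_sum measurable_fst]
      simp only [Measure.map_dirac' measurable_fst]
      rw [hμdef, hAdef]
    have hκsnd : κ.map Prod.snd = ν := by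
      rw [hκdef, Measure.map_add _ _ measurable_snd, Measure.map_add _ _ measurable_snd,
        Measure.map_smul, Measure.map_smul, Measure.map_smul,
        aux_map_finset_sum measurable_snd]
      simp only [Measure.map_dirac' measurable_snd]
      rw [add_assoc, ← add_smul, hsub_add, ← smul_add,
        Finset.sum_erase_add _ _ (Finset.mem_univ j), hνdef]
    have hκcost : ∫⁻ p, ENNReal.ofReal |p.1 - p.2| ∂κ = ENNReal.ofReal θ := by
      rw [hκdef, lintegral_add_measure, lintegral_add_measure, lintegral_smul_measure,
        lintegral_smul_measure, lintegral_smul_measure, lintegral_finset_sum_measure]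
      simp only [lintegral_dirac]
      simp only [sub_self, abs_zero, ENNReal.ofReal_zero, Finset.sum_const_zero, smul_eq_mul,
        mul_zero, zero_add, add_zero]
      have hxsub : x - ωhat j = θ / m := by rw [hxdef]; ring
      rw [hxsub, abs_of_nonneg (by positivity), hm'def, ← ENNReal.ofReal_mul hm0.le, hmθ]
    have hW1 : W1 μ ν ≤ ENNReal.ofReal θ := by
      calc W1 μ ν ≤ ∫⁻ p, ENNReal.ofReal |p.1 - p.2| ∂κ := iInf₂_le _ ⟨hκfst, hκsnd⟩
        _ = ENNReal.ofReal θ := hκcost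
    refine ⟨∫ x, f x ∂μ, ⟨μ, hμprob, hW1, rfl⟩, ?_⟩
    have hIA : Integrable f A := by
      rw [hAdef]
      exact (integrable_finset_sum_measure.mpr (fun i _ => hfint_dirac _)).smul_measure
        hinvtop
    have hIB : Integrable f (((N:ℝ≥0∞)⁻¹ - m') • Measure.dirac (ωhat j)) :=
      (hfint_dirac _).smul_measure hsubtop
    have hIC : Integrable f (m' • Measure.dirac x) :=
      (hfint_dirac _).smul_measure hm'top
    have hint_μ : ∫ y, f y ∂μ = (1/(N:ℝ)) * ∑ i ∈ Finset.univ.erase j, f (ωhat i)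
        + (1/(N:ℝ) - m) * f (ωhat j) + m * f x := by
      rw [hμdef, integral_add_measure (hIA.add_measure hIB) hIC,
        integral_add_measure hIA hIB, hAdef, integral_smul_measure,
        integral_smul_measure, integral_smul_measure,
        integral_finset_sum_measure (fun i _ => hfint_dirac _)]
      simp only [integral_dirac]
      rw [hinvtoReal, ENNReal.toReal_sub_of_le hm'le hinvtop, hinvtoReal, hm'def,
        ENNReal.toReal_ofReal hm0.le]
      simp [smul_eq_mul]
    have hsum : ∑ i, f (ωhat i) = f (ωhat j) + ∑ i ∈ Finset.univ.erase j, f (ωhat i) :=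
      (Finset.add_sum_erase _ _ (Finset.mem_univ j)).symm
    rw [hint_μ, hVdef, hsum, hfx, hxdef]
    have hexp : (1/(N:ℝ)) * ∑ i ∈ Finset.univ.erase j, f (ωhat i)
        + (1/(N:ℝ) - m) * f (ωhat j) + m * (ωhat j + θ / m + d - z)
        = θ + (1/(N:ℝ)) * (f (ωhat j) + ∑ i ∈ Finset.univ.erase j, f (ωhat i)) - m * c := by
      rw [hcdef]
      linear_combination hmθ
    rw [hexp]
    linarith
  have hbdd : BddAbove {e : ℝ | ∃ μ : Measure ℝ, IsProbabilityMeasure μ ∧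
      W1 μ ν ≤ ENNReal.ofReal θ ∧ e = ∫ x, f x ∂μ} := ⟨V, hub⟩
  have hsup : sSup {e : ℝ | ∃ μ : Measure ℝ, IsProbabilityMeasure μ ∧
      W1 μ ν ≤ ENNReal.ofReal θ ∧ e = ∫ x, f x ∂μ} = V := by
    apply le_antisymm (csSup_le ⟨_, hne⟩ hub)
    apply le_of_forall_pos_le_add
    intro ε hε
    obtain ⟨e, he, hVe⟩ := hlb ε hε
    have := le_csSup hbdd he
    linarith
  have hinf : sInf {v : ℝ | ∃ (lam : ℝ) (s : Fin N → ℝ), 1 ≤ lam ∧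
      (∀ i, ωhat i + d - z ≤ s i ∧ 0 ≤ s i + z ∧ 0 ≤ s i) ∧
      v = lam * θ + (1 / (N : ℝ)) * ∑ i, s i} = V := by
    have hmem : V ∈ {v : ℝ | ∃ (lam : ℝ) (s : Fin N → ℝ), 1 ≤ lam ∧
        (∀ i, ωhat i + d - z ≤ s i ∧ 0 ≤ s i + z ∧ 0 ≤ s i) ∧
        v = lam * θ + (1 / (N : ℝ)) * ∑ i, s i} := ⟨1, fun i => f (ωhat i), le_refl 1,
      fun i => ⟨le_max_left _ _, by
        have : -z ≤ f (ωhat i) := le_trans (le_max_left _ _) (le_max_right _ _)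
        linarith, hfnn _⟩, by rw [hVdef]; ring⟩
    have hlow : ∀ v ∈ {v : ℝ | ∃ (lam : ℝ) (s : Fin N → ℝ), 1 ≤ lam ∧
        (∀ i, ωhat i + d - z ≤ s i ∧ 0 ≤ s i + z ∧ 0 ≤ s i) ∧
        v = lam * θ + (1 / (N : ℝ)) * ∑ i, s i}, V ≤ v := by
      rintro v ⟨lam, s, hlam, hs, rfl⟩
      have h1 : θ ≤ lam * θ := by nlinarith
      have h2 : ∑ i, f (ωhat i) ≤ ∑ i, s i := by
        apply Finset.sum_le_sum
        intro i _
        obtain ⟨ha, hb, hc⟩ := hs i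
        exact max_le ha (max_le (by linarith) hc)
      have h3 : (1 / (N:ℝ)) * ∑ i, f (ωhat i) ≤ (1 / (N:ℝ)) * ∑ i, s i :=
        mul_le_mul_of_nonneg_left h2 (by positivity)
      rw [hVdef]; linarith
    exact le_antisymm (csInf_le ⟨V, hlow⟩ hmem) (le_csInf ⟨V, hmem⟩ hlow)
  rw [hsup, hinf]
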